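/- arXiv:2405.06825 — 3 statements merged into one kernel-verified Lean document; each statement's English description precedes it below -/
import Mathlib

section
/- Let K be a perfect field with algebraic closure K̄ and let K ⊆ L ⊆ M be finite extensions inside K̄, with L̃ the Galois closure of L over K. If M ∩ L̃ = L and [M : L] = r_K(M)/r_K(L), then M/L is a Galois extension. -/
/-- The Galois closure inside the algebraic closure of a finite extension `L/K`. -/
noncomputable def galoisClosure (K : Type*) [Field K]
    (L : IntermediateField K (AlgebraicClosure K)) : IntermediateField K (AlgebraicClosure K) :=
  IntermediateField.normalClosure K ↥L (AlgebraicClosure K)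

/-- The cluster size `r_K(L)` of a finite extension `L/K`, which equals `|Aut(L/K)|`
(the number of roots, lying in `L`, of the minimal polynomial of a primitive element of
`L/K`). -/
noncomputable def clusterSize (K : Type*) [Field K]
    (L : IntermediateField K (AlgebraicClosure K)) : ℕ :=
  Nat.card (↥L ≃ₐ[K] ↥L)

open Module IntermediateField

lemma autCard_le_finrank (F E : Type*) [Field F] [Field E] [Algebra F E]
    [FiniteDimensional F E] : Nat.card (E ≃ₐ[F] E) ≤ Module.finrank F E := by
  classical
  rw [Nat.card_eq_fintype_card]
  have h := IntermediateField.finrank_fixedField_eq_card (F := F) (E := E)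
    (⊤ : Subgroup (E ≃ₐ[F] E))
  have hc : Fintype.card (E ≃ₐ[F] E) = Fintype.card (⊤ : Subgroup (E ≃ₐ[F] E)) :=
    (Fintype.card_congr Subgroup.topEquiv.toEquiv).symm
  rw [hc, ← Nat.card_eq_fintype_card, ← h]
  calc finrank (IntermediateField.fixedField (⊤ : Subgroup (E ≃ₐ[F] E))) E
      ≤ finrank F (IntermediateField.fixedField (⊤ : Subgroup (E ≃ₐ[F] E))) *
        finrank (IntermediateField.fixedField (⊤ : Subgroup (E ≃ₐ[F] E))) E :=
        Nat.le_mul_of_pos_left _ finrank_pos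
    _ = finrank F E := Module.finrank_mul_finrank F _ E

/-- Let `K` be a perfect field and `K ⊆ L ⊆ M` finite extensions inside `K̄`,
with `L̃` the Galois closure of `L/K`. If `M ∩ L̃ = L` and `[M : L] = r_K(M)/r_K(L)`
(equivalently `[M : L] · r_K(L) = r_K(M)`, the quotient being exact), then `M/L` is a
Galois extension. -/
theorem stmt_14 (K : Type*) [Field K] [PerfectField K]
    (L M : IntermediateField K (AlgebraicClosure K)) [FiniteDimensional K ↥M]
    (hLM : L ≤ M)
    (hint : M ⊓ galoisClosure K L = L)
    (hdeg : Module.finrank ↥L ↥(IntermediateField.extendScalars hLM) * clusterSize K L =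
      clusterSize K M) :
    IsGalois ↥L ↥(IntermediateField.extendScalars hLM) := by
  classical
  set Ω := AlgebraicClosure K
  set E := IntermediateField.extendScalars hLM with hE
  have hFDL : FiniteDimensional K ↥L :=
    FiniteDimensional.of_injective (IntermediateField.inclusion hLM).toLinearMap
      (IntermediateField.inclusion hLM).toRingHom.injective
  have hFDE' : FiniteDimensional K ↥(E.restrictScalars K) := by
    rw [IntermediateField.extendScalars_restrictScalars]; infer_instance
  have hFDE'' : FiniteDimensional K ↥E := hFDE'
  have hFDE : FiniteDimensional ↥L ↥E := FiniteDimensional.right K ↥L ↥E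
  -- restriction of σ ∈ Aut(M/K) to L lands in L
  have key : ∀ (σ : ↥M ≃ₐ[K] ↥M) (x : ↥L),
      ((M.val.comp (σ.toAlgHom.comp (IntermediateField.inclusion hLM))) x : Ω) ∈ L := by
    intro σ x
    refine hint.le (IntermediateField.mem_inf.mpr ⟨(σ ((IntermediateField.inclusion hLM) x)).2, ?_⟩)
    exact (M.val.comp (σ.toAlgHom.comp (IntermediateField.inclusion hLM))).fieldRange_le_normalClosure
      ⟨x, rfl⟩
  -- the restriction as an AlgHom L → L
  let res : (↥M ≃ₐ[K] ↥M) → (↥L →ₐ[K] ↥L) := fun σ =>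
    (M.val.comp (σ.toAlgHom.comp (IntermediateField.inclusion hLM))).codRestrict
      L.toSubalgebra (key σ)
  -- the restriction homomorphism
  let e := Algebra.IsAlgebraic.algEquivEquivAlgHom K ↥L
  let φ : (↥M ≃ₐ[K] ↥M) →* (↥L ≃ₐ[K] ↥L) :=
    MonoidHom.mk' (fun σ => e.symm (res σ)) (by
      intro σ τ
      have : res (σ * τ) = res σ * res τ := by
        ext x
        rfl
      show e.symm (res (σ * τ)) = e.symm (res σ) * e.symm (res τ)
      rw [this, map_mul])
  -- elements of the kernel of φ give L-algebra automorphisms of E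
  have hker : ∀ σ : ↥M ≃ₐ[K] ↥M, σ ∈ φ.ker →
      ∃ τ : ↥E ≃ₐ[↥L] ↥E, ∀ m : ↥E, (τ m : Ω) = ((σ (show ↥M from m) : ↥M) : Ω) := by
    intro σ hσ
    have hres : res σ = 1 := by
      have : e.symm (res σ) = 1 := hσ
      have := congrArg e this
      rwa [MulEquiv.apply_symm_apply, map_one] at this
    have hfix : ∀ x : ↥L, ((σ ((IntermediateField.inclusion hLM) x) : ↥M) : Ω) = (x : Ω) := by
      intro x
      have h1 : res σ x = x := by rw [hres]; rfl
      exact congrArg (fun y : ↥L => (y : Ω)) h1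
    refine ⟨{ (show ↥E ≃+* ↥E from σ.toRingEquiv) with commutes' := ?_ }, fun m => rfl⟩
    intro r
    exact Subtype.ext (hfix r)
  let ψ : φ.ker → (↥E ≃ₐ[↥L] ↥E) := fun σ => (hker σ.1 σ.2).choose
  have hψ : Function.Injective ψ := by
    intro σ₁ σ₂ h
    have h1 := (hker σ₁.1 σ₁.2).choose_spec
    have h2 := (hker σ₂.1 σ₂.2).choose_spec
    refine Subtype.ext (AlgEquiv.ext fun m => Subtype.ext ?_)
    exact (h1 m).symm.trans
      ((congrArg (fun τ : ↥E ≃ₐ[↥L] ↥E => (τ (show ↥E from m) : Ω)) h).trans (h2 m))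
  have hcard1 : Nat.card φ.ker ≤ Nat.card (↥E ≃ₐ[↥L] ↥E) :=
    Nat.card_le_card_of_injective ψ hψ
  have hsplit : Nat.card (↥M ≃ₐ[K] ↥M) =
      Nat.card ((↥M ≃ₐ[K] ↥M) ⧸ φ.ker) * Nat.card φ.ker :=
    Subgroup.card_eq_card_quotient_mul_card_subgroup _
  have hquot : Nat.card ((↥M ≃ₐ[K] ↥M) ⧸ φ.ker) = Nat.card φ.range :=
    Nat.card_congr (QuotientGroup.quotientKerEquivRange φ).toEquiv
  have hrange : Nat.card φ.range ≤ clusterSize K L :=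
    Nat.card_le_card_of_injective _ Subtype.val_injective
  have hAutE : Nat.card (↥E ≃ₐ[↥L] ↥E) ≤ finrank ↥L ↥E := autCard_le_finrank _ _
  have hLpos : 0 < clusterSize K L := Nat.card_pos
  have hchain : clusterSize K M ≤ clusterSize K L * Nat.card (↥E ≃ₐ[↥L] ↥E) := by
    calc clusterSize K M = Nat.card ((↥M ≃ₐ[K] ↥M) ⧸ φ.ker) * Nat.card φ.ker := hsplit
      _ ≤ clusterSize K L * Nat.card (↥E ≃ₐ[↥L] ↥E) :=
          Nat.mul_le_mul (hquot ▸ hrange) hcard1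
  have hge : finrank ↥L ↥E ≤ Nat.card (↥E ≃ₐ[↥L] ↥E) := by
    have : finrank ↥L ↥E * clusterSize K L ≤ Nat.card (↥E ≃ₐ[↥L] ↥E) * clusterSize K L := by
      rw [hdeg]
      calc clusterSize K M ≤ clusterSize K L * Nat.card (↥E ≃ₐ[↥L] ↥E) := hchain
        _ = Nat.card (↥E ≃ₐ[↥L] ↥E) * clusterSize K L := Nat.mul_comm _ _
    exact Nat.le_of_mul_le_mul_right this hLpos
  have heq : Nat.card (↥E ≃ₐ[↥L] ↥E) = finrank ↥L ↥E := le_antisymm hAutE hge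
  exact IsGalois.of_card_aut_eq_finrank ↥L ↥E heq
end

section
/- Let K be a perfect field and L/K a nontrivial finite extension inside an algebraic closure K̄, with Galois closure L̃, G = Gal(L̃/K) and H = Gal(L̃/L). Then N = L̃^{N_G(H)}, the fixed field of the normalizer of H in G, is the unique intermediate field K ⊆ N ⊆ L such that L/N is Galois with [L : N] = r_K(L). -/
open IntermediateField Module

section transfer
variable {A₁ B₁ A₂ B₂ : Type*} [Field A₁] [Field B₁] [Field A₂] [Field B₂]
    [Algebra A₁ B₁] [Algebra A₂ B₂] (e₁ : A₁ ≃+* A₂) (e₂ : B₁ ≃+* B₂)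
    (he : RingHom.comp (algebraMap A₂ B₂) ↑e₁ = RingHom.comp ↑e₂ (algebraMap A₁ B₁))
include he

lemma Normal.of_equiv_equiv' [Normal A₁ B₁] : Normal A₂ B₂ := by
  letI := e₁.toRingHom.toAlgebra
  letI : Algebra A₂ B₁ :=
    { (algebraMap A₁ B₁).comp e₁.symm.toRingHom with
        algebraMap := (algebraMap A₁ B₁).comp e₁.symm.toRingHom
        smul := fun a b ↦ ((algebraMap A₁ B₁).comp e₁.symm.toRingHom a) * b
        commutes' := fun r x ↦ (Algebra.commutes) (e₁.symm.toRingHom r) x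
        smul_def' := fun _ _ ↦ rfl }
  haveI : IsScalarTower A₁ A₂ B₁ := IsScalarTower.of_algebraMap_eq <| fun x ↦
      (algebraMap A₁ B₁).congr_arg <| id ((e₁.symm_apply_apply x).symm)
  haveI : Normal A₂ B₁ := Normal.tower_top_of_normal A₁ A₂ B₁
  let e : B₁ ≃ₐ[A₂] B₂ :=
    { e₂ with
      commutes' := fun x ↦ by
        simpa [RingHom.algebraMap_toAlgebra] using DFunLike.congr_fun he.symm (e₁.symm x) }
  exact Normal.of_algEquiv e

lemma finrank_eq_of_equiv_equiv' : Module.finrank A₁ B₁ = Module.finrank A₂ B₂ := by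
  have := Algebra.lift_rank_eq_of_equiv_equiv e₁ e₂ he
  have h2 := congrArg Cardinal.toNat this
  simpa [Module.finrank] using h2

end transfer

section grp
variable {G : Type*} [Group G] {H : Subgroup G}

open scoped Pointwise in
lemma conj_smul_eq_iff_mem_normalizer {s : G} :
    MulAut.conj s • H = H ↔ s ∈ Subgroup.normalizer (H : Set G) := by
  constructor
  · intro h
    rw [Subgroup.mem_normalizer_iff]
    intro g
    constructor
    · intro hg
      have := Subgroup.smul_mem_pointwise_smul g (MulAut.conj s) H hg
      rw [h] at this
      simpa [MulAut.smul_def] using this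
    · intro hg
      rw [← h, Subgroup.mem_pointwise_smul_iff_inv_smul_mem] at hg
      simpa [MulAut.smul_def, mul_assoc] using hg
  · intro hs
    ext m
    rw [Subgroup.mem_pointwise_smul_iff_inv_smul_mem]
    simp only [map_inv, MulAut.smul_def, MulAut.conj_inv_apply]
    constructor
    · intro h
      have := (Subgroup.mem_normalizer_iff.mp hs (s⁻¹ * m * s)).mp h
      simpa [mul_assoc] using this
    · intro h
      exact (Subgroup.mem_normalizer_iff.mp hs (s⁻¹ * m * s)).mpr (by
        simpa [mul_assoc] using h)

end grp

section core
variable {K E : Type*} [Field K] [Field E] [Algebra K E] [FiniteDimensional K E] [IsGalois K E]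

open scoped Pointwise in
lemma map_eq_iff_mem_normalizer (Lc : IntermediateField K E) (s : E ≃ₐ[K] E) :
    Lc.map ↑s = Lc ↔ s ∈ Subgroup.normalizer (Lc.fixingSubgroup : Set _) := by
  rw [← conj_smul_eq_iff_mem_normalizer, ← IsGalois.map_fixingSubgroup]
  constructor
  · intro h; rw [h]
  · intro h
    have := congrArg IntermediateField.fixedField h
    rwa [IsGalois.fixedField_fixingSubgroup, IsGalois.fixedField_fixingSubgroup] at this

lemma finrank_extendScalars_top {N Lc : IntermediateField K E} (h : N ≤ Lc) :
    finrank ↥(extendScalars h) E = finrank ↥Lc E := by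
  let i : ↥(extendScalars h) ≃+* ↥Lc :=
    ⟨⟨fun x => ⟨x.1, x.2⟩, fun x => ⟨x.1, x.2⟩, fun _ => rfl, fun _ => rfl⟩, fun _ _ => rfl,
      fun _ _ => rfl⟩
  have := Algebra.lift_rank_eq_of_equiv_equiv i (RingEquiv.refl E) (by ext x; rfl)
  have h2 := congrArg Cardinal.toNat this
  simpa [Module.finrank] using h2

theorem core_thm (Lc : IntermediateField K E) :
    ∃ h : fixedField (Subgroup.normalizer (Lc.fixingSubgroup : Set (E ≃ₐ[K] E))) ≤ Lc,
      IsGalois ↥(fixedField (Subgroup.normalizer (Lc.fixingSubgroup : Set (E ≃ₐ[K] E)))) ↥(extendScalars h) ∧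
      finrank ↥(fixedField (Subgroup.normalizer (Lc.fixingSubgroup : Set (E ≃ₐ[K] E)))) ↥(extendScalars h) =
        Nat.card (↥Lc ≃ₐ[K] ↥Lc) ∧
      ∀ (N' : IntermediateField K E) (h' : N' ≤ Lc), Normal ↥N' ↥(extendScalars h') →
        finrank ↥N' ↥(extendScalars h') = Nat.card (↥Lc ≃ₐ[K] ↥Lc) →
        N' = fixedField (Subgroup.normalizer (Lc.fixingSubgroup : Set (E ≃ₐ[K] E))) := by
  set H := Lc.fixingSubgroup with hHdef
  set M := Subgroup.normalizer (H : Set (E ≃ₐ[K] E)) with hMdef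
  set N₀ := fixedField M with hNdef
  have hFF : fixedField H = Lc := IsGalois.fixedField_fixingSubgroup Lc
  have hMH : fixingSubgroup N₀ = M := fixingSubgroup_fixedField M
  have hNle : N₀ ≤ Lc := by
    rw [← hFF]
    exact (le_iff_le H N₀).mpr (hMH ▸ Subgroup.le_normalizer)
  have hsep : Algebra.IsSeparable ↥N₀ ↥(extendScalars hNle) :=
    Algebra.isSeparable_tower_bot_of_isSeparable ↥N₀ ↥(extendScalars hNle) E
  have hnormal : Normal ↥N₀ ↥(extendScalars hNle) := by
    rw [IntermediateField.normal_iff_forall_map_le']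
    intro σ
    have hs : ((fixingSubgroupEquiv N₀).symm σ : E ≃ₐ[K] E) ∈ fixingSubgroup N₀ :=
      SetLike.coe_mem _
    have hsM : ((fixingSubgroupEquiv N₀).symm σ : E ≃ₐ[K] E) ∈ M := by
      rw [← hMH]; exact hs
    have hmap := (map_eq_iff_mem_normalizer Lc _).mpr hsM
    rintro _ ⟨y, hy, rfl⟩
    show σ y ∈ Lc
    have hcoe : σ y = ((fixingSubgroupEquiv N₀).symm σ : E ≃ₐ[K] E) y := rfl
    rw [hcoe, ← hmap]
    exact ⟨y, hy, rfl⟩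
  have hgal : IsGalois ↥N₀ ↥(extendScalars hNle) :=
    { to_isSeparable := hsep, to_normal := hnormal }
  have hfixpt : ∀ (τ : ↥Lc ≃ₐ[K] ↥Lc) (x : E) (hx : x ∈ N₀), τ ⟨x, hNle hx⟩ = ⟨x, hNle hx⟩ := by
    intro τ x hx
    set g := τ.liftNormal E with hgdef
    have hcomm : ∀ y : ↥Lc, g (y : E) = (τ y : E) := fun y => τ.liftNormal_commutes E y
    have hmap : Lc.map ↑g = Lc := by
      apply le_antisymm
      · rintro _ ⟨y, hy, rfl⟩
        show g y ∈ Lc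
        rw [hcomm ⟨y, hy⟩]
        exact (τ ⟨y, hy⟩).2
      · intro z hz
        refine ⟨(τ.symm ⟨z, hz⟩ : E), (τ.symm ⟨z, hz⟩).2, ?_⟩
        show g ((τ.symm ⟨z, hz⟩ : ↥Lc) : E) = z
        rw [hcomm (τ.symm ⟨z, hz⟩), AlgEquiv.apply_symm_apply]
    have hgM : g ∈ M := (map_eq_iff_mem_normalizer Lc g).mp hmap
    have hx' : g x = x := hx ⟨g, hgM⟩
    exact Subtype.ext (by rw [← hcomm ⟨x, hNle hx⟩]; exact hx')
  let j : ↥(extendScalars hNle) ≃+* ↥Lc :=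
    ⟨⟨fun x => ⟨x.1, x.2⟩, fun x => ⟨x.1, x.2⟩, fun _ => rfl, fun _ => rfl⟩, fun _ _ => rfl,
      fun _ _ => rfl⟩
  have hdeg : finrank ↥N₀ ↥(extendScalars hNle) = Nat.card (↥Lc ≃ₐ[K] ↥Lc) := by
    haveI := hgal
    rw [← IsGalois.card_aut_eq_finrank ↥N₀ ↥(extendScalars hNle)]
    apply Nat.card_congr
    refine ⟨fun σ => AlgEquiv.ofRingEquiv (f := j.symm.trans (σ.toRingEquiv.trans j))
        (fun k => Subtype.ext
          (congrArg Subtype.val (σ.commutes ⟨algebraMap K E k, N₀.algebraMap_mem k⟩))),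
      fun τ => AlgEquiv.ofRingEquiv (f := j.trans (τ.toRingEquiv.trans j.symm))
        (fun n => Subtype.ext (congrArg Subtype.val (hfixpt τ n.1 n.2))),
      fun σ => by ext x; rfl, fun τ => by ext x; rfl⟩
  refine ⟨hNle, hgal, hdeg, ?_⟩
  intro N' h' hnorm hdeg'
  haveI := hnorm
  have hsub : N'.fixingSubgroup ≤ M := by
    intro g hg
    set g' : E ≃ₐ[↥N'] E := fixingSubgroupEquiv N' ⟨g, hg⟩ with hg'def
    have hcoe : ∀ x : E, g' x = g x := fun _ => rfl
    have hcoeinv : ∀ x : E, (g'⁻¹ : E ≃ₐ[↥N'] E) x = (g⁻¹ : E ≃ₐ[K] E) x := by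
      intro x
      have h1 : g' ((g'⁻¹ : E ≃ₐ[↥N'] E) x) = x := g'.apply_symm_apply x
      have h2 : g ((g⁻¹ : E ≃ₐ[K] E) x) = x := g.apply_symm_apply x
      apply g.injective
      rw [h2, ← hcoe ((g'⁻¹ : E ≃ₐ[↥N'] E) x)]
      exact h1
    have hle : ∀ (s : E ≃ₐ[↥N'] E), (extendScalars h').map ↑s ≤ extendScalars h' :=
      IntermediateField.normal_iff_forall_map_le'.mp hnorm
    have hmap : Lc.map ↑g = Lc := by
      apply le_antisymm
      · rintro _ ⟨y, hy, rfl⟩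
        show g y ∈ Lc
        have hmem := hle g' ⟨y, hy, rfl⟩
        rw [← hcoe y]
        exact hmem
      · intro z hz
        refine ⟨(g⁻¹ : E ≃ₐ[K] E) z, ?_, ?_⟩
        · have hmem := hle g'⁻¹ ⟨z, hz, rfl⟩
          rw [← hcoeinv z]
          exact hmem
        · show g ((g⁻¹ : E ≃ₐ[K] E) z) = z
          exact g.apply_symm_apply z
    exact (map_eq_iff_mem_normalizer Lc g).mp hmap
  have hN0N' : N₀ ≤ N' := by
    have h1 : N₀ ≤ fixedField N'.fixingSubgroup :=
      (le_iff_le N'.fixingSubgroup N₀).mpr (by rw [hMH]; exact hsub)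
    rwa [IsGalois.fixedField_fixingSubgroup N'] at h1
  have hr : finrank ↥N₀ E = finrank ↥N' E := by
    rw [← Module.finrank_mul_finrank ↥N₀ ↥(extendScalars hNle) E,
      ← Module.finrank_mul_finrank ↥N' ↥(extendScalars h') E,
      hdeg, hdeg', finrank_extendScalars_top hNle, finrank_extendScalars_top h']
  exact (IntermediateField.eq_of_le_of_finrank_eq' hN0N' hr).symm

end core


/-- `N` is an intermediate field of `L/K` such that `L/N` is Galois of degree `r`. -/
def IsGaloisIntermediateOfDegree (K : Type*) [Field K]
    (N L : IntermediateField K (AlgebraicClosure K)) (r : ℕ) : Prop :=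
  ∃ h : N ≤ L, IsGalois ↥N ↥(IntermediateField.extendScalars h) ∧
    Module.finrank ↥N ↥(IntermediateField.extendScalars h) = r

set_option maxHeartbeats 2000000 in
/-- Let `K` be a perfect field and `L/K` a nontrivial finite extension inside
`K̄`, with Galois closure `L̃`, `G = Gal(L̃/K)` and `H = Gal(L̃/L)`. Then
`N = L̃^{N_G(H)}`, the fixed field of the normalizer of `H` in `G`, is the unique
intermediate field `K ⊆ N ⊆ L` such that `L/N` is Galois with `[L : N] = r_K(L)`. -/
theorem stmt_15 (K : Type*) [Field K] [PerfectField K]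
    (L : IntermediateField K (AlgebraicClosure K)) [FiniteDimensional K ↥L] (hL : L ≠ ⊥) :
    IsGaloisIntermediateOfDegree K
        (IntermediateField.map (galoisClosure K L).val
          (IntermediateField.fixedField
            (Subgroup.normalizer (IntermediateField.fixingSubgroup
                (IntermediateField.comap (galoisClosure K L).val L) : Set _))))
        L (clusterSize K L) ∧
      ∀ N' : IntermediateField K (AlgebraicClosure K),
        IsGaloisIntermediateOfDegree K N' L (clusterSize K L) →
          N' = IntermediateField.map (galoisClosure K L).val
            (IntermediateField.fixedField
              (Subgroup.normalizer (IntermediateField.fixingSubgroup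
                  (IntermediateField.comap (galoisClosure K L).val L) : Set _))) := by
    classical
  haveI hfd : FiniteDimensional K ↥(galoisClosure K L) :=
    normalClosure.is_finiteDimensional K ↥L (AlgebraicClosure K)
  haveI hga : IsGalois K ↥(galoisClosure K L) := by
    show IsGalois K ↥(normalClosure K ↥L (AlgebraicClosure K))
    constructor
  have hLE : L ≤ galoisClosure K L := IntermediateField.le_normalClosure L
  set Lc := IntermediateField.comap (galoisClosure K L).val L with hLcdef
  have hmapLc : IntermediateField.map (galoisClosure K L).val Lc = L :=
    map_comap_eq_self (by rw [fieldRange_val]; exact hLE)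
  obtain ⟨hNle, hgal, hdeg, huniq⟩ := core_thm Lc
  set N₀ := fixedField (Subgroup.normalizer (Lc.fixingSubgroup : Set (↥(galoisClosure K L) ≃ₐ[K] ↥(galoisClosure K L)))) with hN₀def
  -- the aut group comparison
  let eL : ↥Lc ≃ₐ[K] ↥L := (equivMap Lc (galoisClosure K L).val).trans (equivOfEq hmapLc)
  have hAut : Nat.card (↥Lc ≃ₐ[K] ↥Lc) = clusterSize K L :=
    Nat.card_congr (AlgEquiv.autCongr eL).toEquiv
  have hNleL : IntermediateField.map (galoisClosure K L).val N₀ ≤ L := by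
    exact le_trans ((gc_map_comap (galoisClosure K L).val).monotone_l hNle)
      (le_of_eq hmapLc)
  -- transfer equivalences
  let e₁ : ↥N₀ ≃+* ↥(IntermediateField.map (galoisClosure K L).val N₀) :=
    (equivMap N₀ (galoisClosure K L).val).toRingEquiv
  let e₂ : ↥(extendScalars hNle) ≃+* ↥(extendScalars hNleL) :=
    ⟨⟨fun x => ⟨(x : ↥(galoisClosure K L)).1, x.2⟩, fun y => ⟨⟨y.1, hLE y.2⟩, y.2⟩,
      fun _ => rfl, fun _ => rfl⟩, fun _ _ => rfl, fun _ _ => rfl⟩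
  have he : RingHom.comp
        (algebraMap ↥(IntermediateField.map (galoisClosure K L).val N₀) ↥(extendScalars hNleL))
        ↑e₁ = RingHom.comp ↑e₂
        (algebraMap ↥N₀ ↥(extendScalars hNle)) := by
    ext x; rfl
  haveI hno : Normal ↥N₀ ↥(extendScalars hNle) := hgal.to_normal
  haveI hse : Algebra.IsSeparable ↥N₀ ↥(extendScalars hNle) := hgal.to_isSeparable
  have hnormΩ : Normal ↥(IntermediateField.map (galoisClosure K L).val N₀)
      ↥(extendScalars hNleL) := Normal.of_equiv_equiv' e₁ e₂ he
  have hsepΩ : Algebra.IsSeparable ↥(IntermediateField.map (galoisClosure K L).val N₀)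
      ↥(extendScalars hNleL) := Algebra.IsSeparable.of_equiv_equiv e₁ e₂ he
  have hfr : finrank ↥N₀ ↥(extendScalars hNle)
      = finrank ↥(IntermediateField.map (galoisClosure K L).val N₀) ↥(extendScalars hNleL) :=
    finrank_eq_of_equiv_equiv' e₁ e₂ he
  constructor
  · exact ⟨hNleL, { to_isSeparable := hsepΩ, to_normal := hnormΩ },
      by rw [← hfr, hdeg, hAut]⟩
  · rintro N' ⟨h', hgal', hdeg'⟩
    set N'c := IntermediateField.comap (galoisClosure K L).val N' with hN'cdef
    have hN'cLc : N'c ≤ Lc := fun x hx => h' hx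
    have hmapN' : IntermediateField.map (galoisClosure K L).val N'c = N' :=
      map_comap_eq_self (by rw [fieldRange_val]; exact h'.trans hLE)
    let e₁' : ↥N' ≃+* ↥N'c :=
      ⟨⟨fun y => ⟨⟨y.1, hLE (h' y.2)⟩, y.2⟩, fun x => ⟨(x : ↥(galoisClosure K L)).1, x.2⟩,
        fun _ => rfl, fun _ => rfl⟩, fun _ _ => rfl, fun _ _ => rfl⟩
    let e₂' : ↥(extendScalars h') ≃+* ↥(extendScalars hN'cLc) :=
      ⟨⟨fun y => ⟨⟨y.1, hLE y.2⟩, y.2⟩, fun x => ⟨(x : ↥(galoisClosure K L)).1, x.2⟩,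
        fun _ => rfl, fun _ => rfl⟩, fun _ _ => rfl, fun _ _ => rfl⟩
    have he' : RingHom.comp (algebraMap ↥N'c ↥(extendScalars hN'cLc)) ↑e₁'
        = RingHom.comp ↑e₂' (algebraMap ↥N' ↥(extendScalars h')) := by
      ext x; rfl
    haveI hno' : Normal ↥N' ↥(extendScalars h') := hgal'.to_normal
    haveI hse' : Algebra.IsSeparable ↥N' ↥(extendScalars h') := hgal'.to_isSeparable
    have hnormE : Normal ↥N'c ↥(extendScalars hN'cLc) := Normal.of_equiv_equiv' e₁' e₂' he'
    have hfr' : finrank ↥N' ↥(extendScalars h') = finrank ↥N'c ↥(extendScalars hN'cLc) :=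
      finrank_eq_of_equiv_equiv' e₁' e₂' he'
    have hEq : N'c = N₀ :=
      huniq N'c hN'cLc hnormE (by rw [← hfr', hdeg', hAut])
    rw [← hmapN', hEq]
end

section
/- Let K be a perfect field and suppose M/K is obtained by strong cluster magnification from L/K with magnification factor d (i.e., via a finite Galois extension F/K of degree d with L̃ ∩ F = K and LF = M, where L̃ is the Galois closure of L over K). Then t_K(M) = d · t_K(L) and u_K(M) = u_K(L), where for a finite extension P/K, t_K(P) = [F_P : K] with F_P the unique largest intermediate field of P/K that is Galois over K, and u_K(P) = [P : F_P]. -/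
/-- `F₀` is the unique largest intermediate field of `P/K` that is Galois over `K`. -/
def IsMaxGaloisSubextension (K : Type*) [Field K]
    (F₀ P : IntermediateField K (AlgebraicClosure K)) : Prop :=
  F₀ ≤ P ∧ IsGalois K ↥F₀ ∧
    ∀ E : IntermediateField K (AlgebraicClosure K), E ≤ P → IsGalois K ↥E → E ≤ F₀

open Module IntermediateField

section GroupAux

variable {G : Type*} [Group G] [Finite G]

/-- Second isomorphism theorem card consequence. -/
lemma card_sup_mul_card_inf (a b : Subgroup G) [a.Normal] :
    Nat.card ↥(b ⊔ a) * Nat.card ↥(b ⊓ a) = Nat.card ↥b * Nat.card ↥a := by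
  have e := QuotientGroup.quotientInfEquivProdNormalQuotient b a
  have h1 := Subgroup.card_eq_card_quotient_mul_card_subgroup (a.subgroupOf b)
  have h2 := Subgroup.card_eq_card_quotient_mul_card_subgroup (a.subgroupOf (b ⊔ a))
  have h3 : Nat.card ↥(a.subgroupOf b) = Nat.card ↥(b ⊓ a) := by
    refine Nat.card_congr ⟨fun g => ⟨g.1.1, g.1.2, g.2⟩, fun x => ⟨⟨x.1, x.2.1⟩, x.2.2⟩,
      fun g => rfl, fun x => rfl⟩
  have h4 : Nat.card ↥(a.subgroupOf (b ⊔ a)) = Nat.card ↥a :=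
    Nat.card_congr (Subgroup.subgroupOfEquivOfLe le_sup_right).toEquiv
  have h5 : Nat.card (↥b ⧸ a.subgroupOf b) = Nat.card (↥(b ⊔ a) ⧸ a.subgroupOf (b ⊔ a)) :=
    Nat.card_congr e.toEquiv
  calc Nat.card ↥(b ⊔ a) * Nat.card ↥(b ⊓ a)
      = (Nat.card (↥(b ⊔ a) ⧸ a.subgroupOf (b ⊔ a)) * Nat.card ↥a) * Nat.card ↥(b ⊓ a) := by
        rw [← h4, ← h2]
    _ = (Nat.card (↥b ⧸ a.subgroupOf b) * Nat.card ↥(a.subgroupOf b)) * Nat.card ↥a := by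
        rw [← h5, h3]; ring
    _ = Nat.card ↥b * Nat.card ↥a := by rw [← h1]

end GroupAux

section GaloisAux

variable {F E : Type*} [Field F] [Field E] [Algebra F E]

lemma fixingSubgroup_sup' (A B : IntermediateField F E) :
    fixingSubgroup (A ⊔ B) = fixingSubgroup A ⊓ fixingSubgroup B := by
  refine le_antisymm
    (le_inf (fixingSubgroup_antitone le_sup_left) (fixingSubgroup_antitone le_sup_right)) ?_
  refine (le_iff_le _ _).mp (sup_le ?_ ?_)
  · exact (le_iff_le _ _).mpr inf_le_left
  · exact (le_iff_le _ _).mpr inf_le_right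

lemma fixedField_antitone' [FiniteDimensional F E] {H H' : Subgroup (E ≃ₐ[F] E)} (h : H ≤ H') :
    fixedField H' ≤ fixedField H :=
  (le_iff_le H (fixedField H')).mpr (h.trans (le_of_eq (fixingSubgroup_fixedField H').symm))

lemma fixingSubgroup_inf' [FiniteDimensional F E] [IsGalois F E] (A B : IntermediateField F E) :
    fixingSubgroup (A ⊓ B) = fixingSubgroup A ⊔ fixingSubgroup B := by
  have key : A ⊓ B = fixedField (fixingSubgroup A ⊔ fixingSubgroup B) := by
    refine le_antisymm ((le_iff_le _ _).mpr (sup_le (fixingSubgroup_antitone inf_le_left)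
      (fixingSubgroup_antitone inf_le_right))) (le_inf ?_ ?_)
    · conv_rhs => rw [← IsGalois.fixedField_fixingSubgroup A]
      exact fixedField_antitone' le_sup_left
    · conv_rhs => rw [← IsGalois.fixedField_fixingSubgroup B]
      exact fixedField_antitone' le_sup_right
  rw [key, fixingSubgroup_fixedField]

lemma finrank_eq_card_fixingSubgroup [FiniteDimensional F E] [IsGalois F E]
    (X : IntermediateField F E) :
    finrank ↥X E = Nat.card ↥(fixingSubgroup X) := by
  classical
  conv_lhs => rw [← IsGalois.fixedField_fixingSubgroup X]
  rw [IntermediateField.finrank_fixedField_eq_card, Nat.card_eq_fintype_card]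

/-- The key degree identity: for `A` Galois over the base,
`[A⊔B : F] * [A⊓B : F] = [A : F] * [B : F]`. -/
theorem key_aux [FiniteDimensional F E] [IsGalois F E] (A B : IntermediateField F E)
    [IsGalois F ↥A] :
    finrank F ↥(A ⊔ B) * finrank F ↥(A ⊓ B) = finrank F ↥A * finrank F ↥B := by
  haveI : Finite (E ≃ₐ[F] E) := AlgEquiv.fintype F E |>.finite
  have hc : ∀ X : IntermediateField F E,
      finrank F ↥X * Nat.card ↥(fixingSubgroup X) = finrank F E := fun X => by
    rw [← finrank_eq_card_fixingSubgroup X, finrank_mul_finrank]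
  have hgrp : Nat.card ↥(fixingSubgroup (A ⊔ B)) * Nat.card ↥(fixingSubgroup (A ⊓ B))
      = Nat.card ↥(fixingSubgroup A) * Nat.card ↥(fixingSubgroup B) := by
    have := card_sup_mul_card_inf (fixingSubgroup A) (fixingSubgroup B)
    rw [fixingSubgroup_sup', fixingSubgroup_inf']
    rw [inf_comm, sup_comm] at this
    linarith [this]
  have h1 := hc (A ⊔ B)
  have h2 := hc (A ⊓ B)
  have h3 := hc A
  have h4 := hc B
  have hpos : 0 < Nat.card ↥(fixingSubgroup A) * Nat.card ↥(fixingSubgroup B) :=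
    Nat.mul_pos Nat.card_pos Nat.card_pos
  have main : (finrank F ↥(A ⊔ B) * finrank F ↥(A ⊓ B)) *
      (Nat.card ↥(fixingSubgroup A) * Nat.card ↥(fixingSubgroup B))
      = (finrank F ↥A * finrank F ↥B) *
      (Nat.card ↥(fixingSubgroup A) * Nat.card ↥(fixingSubgroup B)) := by
    calc finrank F ↥(A ⊔ B) * finrank F ↥(A ⊓ B) *
        (Nat.card ↥(fixingSubgroup A) * Nat.card ↥(fixingSubgroup B))
        = finrank F ↥(A ⊔ B) * finrank F ↥(A ⊓ B) *
          (Nat.card ↥(fixingSubgroup (A ⊔ B)) * Nat.card ↥(fixingSubgroup (A ⊓ B))) := by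
          rw [hgrp]
      _ = (finrank F ↥(A ⊔ B) * Nat.card ↥(fixingSubgroup (A ⊔ B))) *
          (finrank F ↥(A ⊓ B) * Nat.card ↥(fixingSubgroup (A ⊓ B))) := by ring
      _ = (finrank F ↥A * Nat.card ↥(fixingSubgroup A)) *
          (finrank F ↥B * Nat.card ↥(fixingSubgroup B)) := by rw [h1, h2, h3, h4]
      _ = finrank F ↥A * finrank F ↥B *
          (Nat.card ↥(fixingSubgroup A) * Nat.card ↥(fixingSubgroup B)) := by ring
  exact Nat.eq_of_mul_eq_mul_right hpos main

end GaloisAux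

section OmegaAux

variable (K : Type*) [Field K] [PerfectField K]

local notation "Ω" => AlgebraicClosure K

/-- Auxiliary: finite-dimensionality descends to smaller intermediate fields. -/
lemma findim_of_le {X Y : IntermediateField K Ω} [FiniteDimensional K ↥Y] (h : X ≤ Y) :
    FiniteDimensional K ↥X := by
  have : FiniteDimensional K Y.toSubmodule := ‹FiniteDimensional K ↥Y›
  exact Submodule.finiteDimensional_of_le (show X.toSubmodule ≤ Y.toSubmodule from h)

lemma finrank_mono_of_le {X Y : IntermediateField K Ω} [FiniteDimensional K ↥Y] (h : X ≤ Y) :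
    finrank K ↥X ≤ finrank K ↥Y := by
  have : Module.Finite K Y.toSubmodule := ‹FiniteDimensional K ↥Y›
  exact Submodule.finrank_mono (show X.toSubmodule ≤ Y.toSubmodule from h)

/-- The key identity, transferred into the algebraic closure. -/
theorem keyOmega (A B : IntermediateField K Ω) [FiniteDimensional K ↥A]
    [FiniteDimensional K ↥B] [IsGalois K ↥A] :
    finrank K ↥(A ⊔ B) * finrank K ↥(A ⊓ B) = finrank K ↥A * finrank K ↥B := by
  set C : IntermediateField K Ω := A ⊔ normalClosure K ↥B Ω with hC
  haveI : FiniteDimensional K ↥C := IntermediateField.finiteDimensional_sup _ _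
  haveI : Normal K ↥C := IntermediateField.normal_sup (F := K) (K := Ω) A (normalClosure K ↥B Ω)
  haveI : IsGalois K ↥C := ⟨⟩
  have hA : A ≤ C := le_sup_left
  have hB : B ≤ C := (IntermediateField.le_normalClosure B).trans le_sup_right
  set A₁ := IntermediateField.comap C.val A with hA₁
  set B₁ := IntermediateField.comap C.val B with hB₁
  have hrange : C.val.fieldRange = C := IntermediateField.fieldRange_val C
  have hmapA : IntermediateField.map C.val A₁ = A :=
    IntermediateField.map_comap_eq_self (by rw [hrange]; exact hA)
  have hmapB : IntermediateField.map C.val B₁ = B :=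
    IntermediateField.map_comap_eq_self (by rw [hrange]; exact hB)
  have eqd : ∀ (X : IntermediateField K ↥C) (Y : IntermediateField K Ω),
      IntermediateField.map C.val X = Y → finrank K ↥X = finrank K ↥Y := by
    intro X Y hXY
    exact LinearEquiv.finrank_eq ((IntermediateField.equivMap X C.val).trans
      (IntermediateField.equivOfEq hXY)).toLinearEquiv
  have eA : finrank K ↥A₁ = finrank K ↥A := eqd A₁ A hmapA
  have eB : finrank K ↥B₁ = finrank K ↥B := eqd B₁ B hmapB
  have eSup : finrank K ↥(A₁ ⊔ B₁) = finrank K ↥(A ⊔ B) := by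
    refine eqd _ _ ?_
    rw [IntermediateField.map_sup, hmapA, hmapB]
  have eInf : finrank K ↥(A₁ ⊓ B₁) = finrank K ↥(A ⊓ B) := by
    refine eqd _ _ ?_
    rw [IntermediateField.map_inf, hmapA, hmapB]
  haveI : IsGalois K ↥A₁ := by
    refine IsGalois.of_algEquiv (E := ↥A) ?_
    exact ((IntermediateField.equivMap A₁ C.val).trans (IntermediateField.equivOfEq hmapA)).symm
  rw [← eA, ← eB, ← eSup, ← eInf]
  exact key_aux A₁ B₁

/-- Disjoint special case. -/
theorem keyOmegaDisj (A B : IntermediateField K Ω) [FiniteDimensional K ↥A]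
    [FiniteDimensional K ↥B] [IsGalois K ↥A] (h : A ⊓ B = ⊥) :
    finrank K ↥(A ⊔ B) = finrank K ↥A * finrank K ↥B := by
  have := keyOmega K A B
  rwa [h, IntermediateField.finrank_bot, mul_one] at this

end OmegaAux


/-- Let `K` be a perfect field and suppose `M/K` is obtained by strong cluster
magnification from `L/K` with magnification factor `d = [F : K]` (via a finite Galois
extension `F/K` with `L̃ ∩ F = K` and `LF = M`, and `[L : K] > 2`). Let `F_L` (resp. `F_M`)
be the unique largest intermediate field of `L/K` (resp. of `M/K`) Galois over `K`, so that
`t_K(L) = [F_L : K]`, `u_K(L) = [L : F_L]`, and similarly for `M`. Then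
`t_K(M) = d · t_K(L)` and `u_K(M) = u_K(L)`. -/
theorem stmt_19 (K : Type*) [Field K] [PerfectField K]
    (L F M : IntermediateField K (AlgebraicClosure K))
    [FiniteDimensional K ↥L] [FiniteDimensional K ↥F] [FiniteDimensional K ↥M]
    (hdeg : 2 < Module.finrank K ↥L) (hFgal : IsGalois K ↥F)
    (hdisj : galoisClosure K L ⊓ F = ⊥) (hcomp : L ⊔ F = M)
    (FL FM : IntermediateField K (AlgebraicClosure K))
    (hFL : IsMaxGaloisSubextension K FL L) (hFM : IsMaxGaloisSubextension K FM M) :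
    Module.finrank K ↥FM = Module.finrank K ↥F * Module.finrank K ↥FL ∧
    Module.finrank ↥FM ↥(IntermediateField.extendScalars hFM.1) =
      Module.finrank ↥FL ↥(IntermediateField.extendScalars hFL.1) := by
  classical
  haveI := hFgal
  set Ω := AlgebraicClosure K with hΩ
  set Lt := galoisClosure K L with hLtdef
  have hLLt : L ≤ Lt := IntermediateField.le_normalClosure L
  haveI : FiniteDimensional K ↥Lt := normalClosure.is_finiteDimensional K ↥L Ω
  haveI : Normal K ↥Lt := normalClosure.normal K ↥L Ω
  haveI : IsGalois K ↥Lt := ⟨⟩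
  have hLM : L ≤ M := hcomp ▸ le_sup_left
  have hFleM : F ≤ M := hcomp ▸ le_sup_right
  haveI : FiniteDimensional K ↥FM := findim_of_le K hFM.1
  haveI : FiniteDimensional K ↥FL := findim_of_le K (hFL.1.trans hLM)
  haveI gFM : IsGalois K ↥FM := hFM.2.1
  haveI gFL : IsGalois K ↥FL := hFL.2.1
  have rFpos : 0 < finrank K ↥F := finrank_pos
  have rLtpos : 0 < finrank K ↥Lt := finrank_pos
  have disj : ∀ X : IntermediateField K Ω, X ≤ Lt → F ⊓ X = ⊥ := fun X hX =>
    bot_unique ((le_inf (inf_le_right.trans hX) inf_le_left).trans hdisj.le)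
  -- [M : K] = [L : K] * [F : K]
  have h1 : finrank K ↥M = finrank K ↥L * finrank K ↥F := by
    have h := keyOmegaDisj K F L (disj L hLLt)
    rw [sup_comm, hcomp] at h
    rw [h, mul_comm]
  -- M ⊓ Lt = L
  haveI : FiniteDimensional K ↥(M ⊓ Lt) := findim_of_le K inf_le_left
  have h2 : M ⊓ Lt = L := by
    have hd := keyOmegaDisj K F (M ⊓ Lt) (disj _ inf_le_right)
    have hm : finrank K ↥(F ⊔ (M ⊓ Lt)) ≤ finrank K ↥M :=
      finrank_mono_of_le K (sup_le hFleM inf_le_left)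
    rw [hd, h1] at hm
    have hle : finrank K ↥(M ⊓ Lt) ≤ finrank K ↥L := by
      refine Nat.le_of_mul_le_mul_right ?_ rFpos
      calc finrank K ↥(M ⊓ Lt) * finrank K ↥F
          = finrank K ↥F * finrank K ↥(M ⊓ Lt) := mul_comm _ _
        _ ≤ finrank K ↥L * finrank K ↥F := hm
    exact (IntermediateField.eq_of_le_of_finrank_le (le_inf hLM hLLt) hle).symm
  -- Y = FM ⊔ F
  set Y := FM ⊔ F with hYdef
  haveI : FiniteDimensional K ↥Y := IntermediateField.finiteDimensional_sup _ _
  haveI : Normal K ↥Y := IntermediateField.normal_sup (F := K) (K := Ω) FM F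
  haveI : IsGalois K ↥Y := ⟨⟩
  have hYM : Y ≤ M := sup_le hFM.1 hFleM
  haveI : FiniteDimensional K ↥(Y ⊓ Lt) := findim_of_le K inf_le_left
  have hFLt : finrank K ↥(F ⊔ Lt) = finrank K ↥F * finrank K ↥Lt :=
    keyOmegaDisj K F Lt (disj Lt le_rfl)
  have hMFLt : M ≤ F ⊔ Lt := by
    rw [← hcomp]
    exact sup_le (hLLt.trans le_sup_right) le_sup_left
  have h3 : finrank K ↥Y ≤ finrank K ↥F * finrank K ↥(Y ⊓ Lt) := by
    have hYLt := keyOmega K Y Lt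
    have hm : finrank K ↥(Y ⊔ Lt) ≤ finrank K ↥F * finrank K ↥Lt := by
      rw [← hFLt]
      exact finrank_mono_of_le K (sup_le (hYM.trans hMFLt) le_sup_right)
    refine Nat.le_of_mul_le_mul_right ?_ rLtpos
    calc finrank K ↥Y * finrank K ↥Lt
        = finrank K ↥(Y ⊔ Lt) * finrank K ↥(Y ⊓ Lt) := hYLt.symm
      _ ≤ (finrank K ↥F * finrank K ↥Lt) * finrank K ↥(Y ⊓ Lt) :=
          Nat.mul_le_mul_right _ hm
      _ = (finrank K ↥F * finrank K ↥(Y ⊓ Lt)) * finrank K ↥Lt := by ring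
  have hZdisj := keyOmegaDisj K F (Y ⊓ Lt) (disj _ inf_le_right)
  have h4 : F ⊔ (Y ⊓ Lt) = Y := by
    refine IntermediateField.eq_of_le_of_finrank_le (sup_le le_sup_right inf_le_left) ?_
    rw [hZdisj]
    exact h3
  haveI : Normal K ↥(Y ⊓ Lt) := IntermediateField.normal_inf (F := K) (K := Ω) Y Lt
  haveI : IsGalois K ↥(Y ⊓ Lt) := ⟨⟩
  have h5 : Y ⊓ Lt ≤ FL := by
    refine hFL.2.2 _ ?_ ‹IsGalois K ↥(Y ⊓ Lt)›
    rw [← h2]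
    exact inf_le_inf_right Lt hYM
  haveI : FiniteDimensional K ↥(FL ⊔ F) := IntermediateField.finiteDimensional_sup _ _
  haveI : Normal K ↥(FL ⊔ F) := IntermediateField.normal_sup (F := K) (K := Ω) FL F
  haveI : IsGalois K ↥(FL ⊔ F) := ⟨⟩
  have h6 : FM = FL ⊔ F := by
    refine le_antisymm ?_ (hFM.2.2 _ (sup_le (hFL.1.trans hLM) hFleM) ‹IsGalois K ↥(FL ⊔ F)›)
    calc FM ≤ Y := le_sup_left
      _ = F ⊔ (Y ⊓ Lt) := h4.symm
      _ ≤ FL ⊔ F := sup_le le_sup_right (h5.trans le_sup_left)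
  have g1 : finrank K ↥FM = finrank K ↥F * finrank K ↥FL := by
    rw [h6, sup_comm]
    exact keyOmegaDisj K F FL (disj FL (hFL.1.trans hLLt))
  refine ⟨g1, ?_⟩
  -- second goal
  have tM : finrank K ↥FM * finrank ↥FM ↥(IntermediateField.extendScalars hFM.1)
      = finrank K ↥M := by
    rw [finrank_mul_finrank K ↥FM ↥(IntermediateField.extendScalars hFM.1)]
    rfl
  have tL : finrank K ↥FL * finrank ↥FL ↥(IntermediateField.extendScalars hFL.1)
      = finrank K ↥L := by
    rw [finrank_mul_finrank K ↥FL ↥(IntermediateField.extendScalars hFL.1)]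
    rfl
  have rFLpos : 0 < finrank K ↥FL := finrank_pos
  refine Nat.eq_of_mul_eq_mul_left (Nat.mul_pos rFpos rFLpos) ?_
  calc (finrank K ↥F * finrank K ↥FL) * finrank ↥FM ↥(IntermediateField.extendScalars hFM.1)
      = finrank K ↥FM * finrank ↥FM ↥(IntermediateField.extendScalars hFM.1) := by rw [g1]
    _ = finrank K ↥M := tM
    _ = finrank K ↥L * finrank K ↥F := h1
    _ = (finrank K ↥FL * finrank ↥FL ↥(IntermediateField.extendScalars hFL.1)) *
        finrank K ↥F := by rw [tL]
    _ = (finrank K ↥F * finrank K ↥FL) *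
        finrank ↥FL ↥(IntermediateField.extendScalars hFL.1) := by ring
end
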